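/- For every n ≥ 1, the topological space (𝕆_sⁿ, τ_s) is connected, path-connected, and locally path-connected. -/

import Mathlib

/-! Octonions via the Cayley–Dickson construction on the quaternions,
the n-dimensional quadratic cone, the slice topology, and slice regularity. -/

noncomputable section
open Quaternion Topology

/-- The octonions, as `ℍ × ℍ` with the (L²) Euclidean norm and
Cayley–Dickson multiplication. -/
abbrev Oct : Type := WithLp 2 (ℍ × ℍ)

namespace Oct

def c1 (p : Oct) : ℍ := (WithLp.equiv 2 (ℍ × ℍ) p).1
def c2 (p : Oct) : ℍ := (WithLp.equiv 2 (ℍ × ℍ) p).2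
def mk (a b : ℍ) : Oct := (WithLp.equiv 2 (ℍ × ℍ)).symm (a, b)

instance : One Oct := ⟨mk 1 0⟩

/-- Cayley–Dickson multiplication. -/
instance : Mul Oct :=
  ⟨fun p q => mk (c1 p * c1 q - star (c2 q) * c2 p) (c2 q * c1 p + c2 p * star (c1 q))⟩

/-- Octonionic conjugation. -/
instance : Star Oct := ⟨fun p => mk (star (c1 p)) (-(c2 p))⟩

/-- Inverse: `p⁻¹ = ‖p‖⁻² • (star p)` (so `0⁻¹ = 0`). -/
instance : Inv Oct := ⟨fun p => (‖p‖ ^ 2)⁻¹ • star p⟩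

/-- The real inner product on `𝕆 ≅ ℝ⁸`, via polarization. -/
def oinner (p q : Oct) : ℝ := (1 / 4) * (‖p + q‖ ^ 2 - ‖p - q‖ ^ 2)

/-- The sphere `𝕊` of imaginary units of the octonions. -/
def Sph : Set Oct := {I | I * I = -1}

/-- The slice complex plane `ℂ_I = ℝ + ℝ I ⊆ 𝕆`. -/
def CI (I : Oct) : Set Oct := {z | ∃ s t : ℝ, z = s • (1 : Oct) + t • I}

end Oct

open Oct

/-- The point `x + y I ∈ ℂ_Iⁿ ⊆ 𝕆ⁿ`. -/
def aff {n : ℕ} (x y : Fin n → ℝ) (I : Oct) : Fin n → Oct :=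
  fun m => x m • (1 : Oct) + y m • I

/-- The embedding `ℝⁿ ⊆ 𝕆ⁿ`. -/
def ofRealn {n : ℕ} (x : Fin n → ℝ) : Fin n → Oct := fun m => x m • (1 : Oct)

/-- The slice `ℂ_Iⁿ ⊆ 𝕆ⁿ`. -/
def slicen (n : ℕ) (I : Oct) : Set (Fin n → Oct) := {q | ∃ x y : Fin n → ℝ, q = aff x y I}

/-- The `n`-dimensional quadratic cone `𝕆ₛⁿ = ⋃_{I ∈ 𝕊} ℂ_Iⁿ`. -/
def cone (n : ℕ) : Set (Fin n → Oct) := ⋃ I ∈ Sph, slicen n I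

/-- The slice topology `τ_s`: a set is open iff its trace on every slice `ℂ_Iⁿ`
is open (expressed via the canonical parametrizations `(x,y) ↦ x + yI`). -/
def τs (n : ℕ) : TopologicalSpace (Fin n → Oct) :=
  ⨆ I : Sph, TopologicalSpace.coinduced
    (fun p : (Fin n → ℝ) × (Fin n → ℝ) => aff p.1 p.2 I.1) inferInstance

/-- A slice-open subset of the quadratic cone. -/
def SliceOpen (n : ℕ) (Ω : Set (Fin n → Oct)) : Prop :=
  Ω ⊆ cone n ∧ IsOpen[τs n] Ω

/-- A slice-domain: a nonempty slice-connected slice-open subset of the cone. -/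
def SliceDomain (n : ℕ) (Ω : Set (Fin n → Oct)) : Prop :=
  SliceOpen n Ω ∧ @IsConnected _ (τs n) Ω

/-- Real-connectedness: `Ω ∩ ℝⁿ` is a (pre)connected subset of `ℝⁿ`. -/
def RealConnected (n : ℕ) (Ω : Set (Fin n → Oct)) : Prop :=
  IsPreconnected {x : Fin n → ℝ | ofRealn x ∈ Ω}

/-- Axially symmetric subsets of the cone. -/
def AxSymm (n : ℕ) (Ω : Set (Fin n → Oct)) : Prop :=
  ∀ (x y : Fin n → ℝ), ∀ I ∈ Sph, ∀ J ∈ Sph, aff x y I ∈ Ω → aff x y J ∈ Ω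

/-- The upper half-space `ℝ²ⁿ₊`: pairs `(x,y)` with `y = 0` or the first
nonzero coordinate of `y` positive. -/
def pos2n (n : ℕ) : Set ((Fin n → ℝ) × (Fin n → ℝ)) :=
  {p | p.2 = 0 ∨ ∃ m : Fin n, 0 < p.2 m ∧ ∀ k : Fin n, k < m → p.2 k = 0}

/-- `Ω_{s₁}`. -/
def s1 {n : ℕ} (Ω : Set (Fin n → Oct)) : Set ((Fin n → ℝ) × (Fin n → ℝ)) :=
  {p | ∃ I ∈ Sph, aff p.1 p.2 I ∈ Ω}

/-- `Ω_{s₂}`. -/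
def s2 {n : ℕ} (Ω : Set (Fin n → Oct)) : Set ((Fin n → ℝ) × (Fin n → ℝ)) :=
  {p | ∃ J ∈ Sph, ∃ K ∈ Sph, J ≠ K ∧ aff p.1 p.2 J ∈ Ω ∧ aff p.1 p.2 K ∈ Ω}

/-- Slice functions: induced on `Ω_{s₂}⁺` by a pair `(F₁, F₂)` via
`f(x + yI) = F₁(x,y) + I·F₂(x,y)`. -/
def IsSliceFun (n : ℕ) (Ω : Set (Fin n → Oct)) (f : (Fin n → Oct) → Oct) : Prop :=
  ∃ F₁ F₂ : (Fin n → ℝ) × (Fin n → ℝ) → Oct,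
    ∀ x y : Fin n → ℝ, (x, y) ∈ s2 Ω ∩ pos2n n → ∀ I ∈ Sph, aff x y I ∈ Ω →
      f (aff x y I) = F₁ (x, y) + I * F₂ (x, y)

/-- Holomorphy of a function of `n` slice variables, read through the
parametrization `(x,y) ↦ x + yI`: continuous partial derivatives (i.e. `C¹`)
and the Cauchy–Riemann equations `(∂/∂xₘ + I ∂/∂yₘ) g = 0` on `U`. -/
def Holo (n : ℕ) (I : Oct) (g : (Fin n → ℝ) × (Fin n → ℝ) → Oct)
    (U : Set ((Fin n → ℝ) × (Fin n → ℝ))) : Prop :=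
  ContDiffOn ℝ 1 g U ∧
  ∀ p ∈ U, ∀ m : Fin n,
    fderiv ℝ g p (Pi.single m 1, 0) + I * fderiv ℝ g p (0, Pi.single m 1) = 0

/-- Weak slice regularity: each restriction `f|_{Ω ∩ ℂ_Iⁿ}` is holomorphic. -/
def WSliceReg (n : ℕ) (Ω : Set (Fin n → Oct)) (f : (Fin n → Oct) → Oct) : Prop :=
  ∀ I ∈ Sph, Holo n I (fun p => f (aff p.1 p.2 I)) {p | aff p.1 p.2 I ∈ Ω}

/-- The complex structure `σ(a,b) = (−b,a)` on `𝕆²`. -/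
def sigma2 : Oct × Oct → Oct × Oct := fun w => (-w.2, w.1)

/-- Holomorphic stem maps: `F : V → 𝕆²` extends to a `C¹` map `G` on an open
neighborhood `U ⊇ V` satisfying `(∂/∂xₘ + σ ∂/∂yₘ) G = 0` on `U`. -/
def StemHolo (n : ℕ) (V : Set ((Fin n → ℝ) × (Fin n → ℝ)))
    (F : (Fin n → ℝ) × (Fin n → ℝ) → Oct × Oct) : Prop :=
  ∃ (U : Set ((Fin n → ℝ) × (Fin n → ℝ))) (G : (Fin n → ℝ) × (Fin n → ℝ) → Oct × Oct),
    IsOpen U ∧ V ⊆ U ∧ Set.EqOn G F V ∧ ContDiffOn ℝ 1 G U ∧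
    ∀ p ∈ U, ∀ m : Fin n,
      fderiv ℝ G p (Pi.single m 1, 0) + sigma2 (fderiv ℝ G p (0, Pi.single m 1)) = 0

/-- Strong slice regularity: `f` is induced by a holomorphic stem map on `Ω_{s₁}`. -/
def SSliceReg (n : ℕ) (Ω : Set (Fin n → Oct)) (f : (Fin n → Oct) → Oct) : Prop :=
  ∃ F : (Fin n → ℝ) × (Fin n → ℝ) → Oct × Oct, StemHolo n (s1 Ω) F ∧
    ∀ x y : Fin n → ℝ, ∀ I ∈ Sph, aff x y I ∈ Ω →
      f (aff x y I) = (F (x, y)).1 + I * (F (x, y)).2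

/-- An s-basis `{I, J, K}` of the octonions. -/
def IsSBasis (I J K : Oct) : Prop :=
  I ∈ Sph ∧ J ∈ Sph ∧ K ∈ Sph ∧
  LinearIndependent ℝ ![(1 : Oct), I, J, I * J, K, J * K, I * K, (I * J) * K] ∧
  Submodule.span ℝ (Set.range ![(1 : Oct), I, J, I * J, K, J * K, I * K, (I * J) * K]) = ⊤

/-- Iterated left multiplication `L_w^β = (L_{w₁})^{β₁} ∘ ⋯ ∘ (L_{wₙ})^{βₙ}`. -/
def Lpow {n : ℕ} (w : Fin n → Oct) (β : Fin n → ℕ) : Oct → Oct :=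
  fun a => (List.finRange n).foldr (fun ℓ c => (fun o => w ℓ * o)^[β ℓ] c) a

/-- The `*`-power `(q − p)^{*α} a = ∑_{β ≤ α} C(α,β) L_q^β (L_{−p}^{α−β} a)`. -/
def starPow {n : ℕ} (p : Fin n → Oct) (α : Fin n → ℕ) (a : Oct) (q : Fin n → Oct) : Oct :=
  ∑ β ∈ Finset.Iic α, (∏ ℓ, (α ℓ).choose (β ℓ)) • Lpow q β (Lpow (-p) (α - β) a)

/-- The `ℓ`-th slice derivative `∂_ℓ f (x + w) = (∂/∂x_ℓ) f (x + w)`. -/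
def sderiv {n : ℕ} (ℓ : Fin n) (f : (Fin n → Oct) → Oct) : (Fin n → Oct) → Oct :=
  fun q => deriv (fun t : ℝ => f (fun m => q m + (if m = ℓ then t else 0) • (1 : Oct))) 0

/-- The iterated slice derivative `f^{(α)} = (∂₁)^{α₁} ⋯ (∂ₙ)^{αₙ} f`. -/
def sderivMulti {n : ℕ} (α : Fin n → ℕ) (f : (Fin n → Oct) → Oct) : (Fin n → Oct) → Oct :=
  (List.finRange n).foldr (fun ℓ g => (sderiv ℓ)^[α ℓ] g) f

/-- The slice-polydisc `P̃(q₀, r)` (relative to `I ∈ 𝕊` with `q₀ ∈ ℂ_Iⁿ`):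
points `x + yJ` with `x ± yI` in the closed polydisc `P_I(q₀, r)`. -/
def polyDisc {n : ℕ} (q₀ : Fin n → Oct) (I : Oct) (r : Fin n → ℝ) : Set (Fin n → Oct) :=
  {q | ∃ x y : Fin n → ℝ, ∃ J ∈ Sph, q = aff x y J ∧
        (∀ ℓ, ‖aff x y I ℓ - q₀ ℓ‖ ≤ r ℓ) ∧ (∀ ℓ, ‖aff x (-y) I ℓ - q₀ ℓ‖ ≤ r ℓ)}

lemma I0_mem_Sph : Oct.mk 0 1 ∈ Sph := by
  show Oct.mk 0 1 * Oct.mk 0 1 = -1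
  show Oct.mk _ _ = -1
  simp only [Oct.c1, Oct.c2, Oct.mk, Equiv.apply_symm_apply, star_one, mul_one, one_mul,
    mul_zero, zero_mul, zero_add, add_zero, zero_sub, star_zero]
  rw [show ((-1, 0) : ℍ × ℍ) = -(1, 0) by simp, WithLp.equiv_symm_apply, WithLp.toLp_neg]
  rfl

def conemap (n : ℕ) : ((I : ↥Sph) × ((Fin n → ℝ) × (Fin n → ℝ))) → ↥(cone n) :=
  fun z => ⟨aff z.2.1 z.2.2 z.1.1, Set.mem_biUnion z.1.2 ⟨z.2.1, z.2.2, rfl⟩⟩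

lemma top_eq (n : ℕ) :
    TopologicalSpace.induced (Subtype.val : ↥(cone n) → (Fin n → Oct)) (τs n)
      = TopologicalSpace.coinduced (conemap n) inferInstance := by
  refine TopologicalSpace.ext_iff.mpr fun V => ?_
  rw [isOpen_coinduced, @isOpen_induced_iff _ _ (τs n) V Subtype.val, isOpen_sigma_iff]
  constructor
  · rintro ⟨U, hU, rfl⟩
    intro I
    have hI := (isOpen_iSup_iff.mp hU) I
    rw [isOpen_coinduced] at hI
    exact hI
  · intro h
    refine ⟨Subtype.val '' V ∪ (cone n)ᶜ, ?_, ?_⟩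
    · rw [show τs n = ⨆ I : Sph, TopologicalSpace.coinduced
        (fun p : (Fin n → ℝ) × (Fin n → ℝ) => aff p.1 p.2 I.1) inferInstance from rfl,
        isOpen_iSup_iff]
      intro I
      rw [isOpen_coinduced]
      have heq : (fun p : (Fin n → ℝ) × (Fin n → ℝ) => aff p.1 p.2 I.1) ⁻¹'
          (Subtype.val '' V ∪ (cone n)ᶜ)
          = Sigma.mk I ⁻¹' (conemap n ⁻¹' V) := by
        ext p
        simp only [Set.mem_preimage, Set.mem_union, Set.mem_image, Set.mem_compl_iff]
        constructor
        · rintro (⟨v, hv, hval⟩ | hc)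
          · obtain rfl : v = conemap n ⟨I, p⟩ := Subtype.ext hval
            exact hv
          · exact absurd (conemap n ⟨I, p⟩).2 hc
        · intro hv
          exact Or.inl ⟨conemap n ⟨I, p⟩, hv, rfl⟩
      rw [heq]
      exact h I
    · ext v
      simp only [Set.mem_preimage, Set.mem_union, Set.mem_image, Set.mem_compl_iff]
      constructor
      · rintro (⟨w, hw, hval⟩ | hc)
        · obtain rfl : w = v := Subtype.ext hval
          exact hw
        · exact absurd v.2 hc
      · intro hv; exact Or.inl ⟨v, hv, rfl⟩

/-- The quadratic cone `𝕆ₛⁿ` with the slice topology is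
connected, path-connected and locally path-connected. -/
theorem cone_connected_pathConnected_locPathConnected (n : ℕ) (hn : 1 ≤ n) :
    @ConnectedSpace ↥(cone n)
      (TopologicalSpace.induced (Subtype.val : ↥(cone n) → (Fin n → Oct)) (τs n)) ∧
    @PathConnectedSpace ↥(cone n)
      (TopologicalSpace.induced (Subtype.val : ↥(cone n) → (Fin n → Oct)) (τs n)) ∧
    @LocPathConnectedSpace ↥(cone n)
      (TopologicalSpace.induced (Subtype.val : ↥(cone n) → (Fin n → Oct)) (τs n)) := by
  rw [top_eq n]
  letI tT : TopologicalSpace ↥(cone n) := TopologicalSpace.coinduced (conemap n) inferInstance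
  have hq : Continuous (conemap n) := continuous_coinduced_rng
  have hloc : LocPathConnectedSpace ↥(cone n) := LocPathConnectedSpace.coinduced (conemap n)
  set z₀ : ↥(cone n) := conemap n ⟨⟨Oct.mk 0 1, I0_mem_Sph⟩, (0, 0)⟩ with hz₀
  have hjoin : ∀ z : ↥(cone n), Joined z z₀ := by
    intro z
    obtain ⟨I, hI, x, y, hxy⟩ : ∃ I ∈ Sph, ∃ x y, z.1 = aff x y I := by
      obtain ⟨I, hI, x, y, hxy⟩ := Set.mem_iUnion₂.mp
        (show (z : Fin n → Oct) ∈ ⋃ I ∈ Sph, slicen n I from z.2)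
      exact ⟨I, hI, x, y, hxy⟩
    refine ⟨⟨⟨fun t => conemap n ⟨⟨I, hI⟩, ((1 - t.1) • x, (1 - t.1) • y)⟩, ?_⟩, ?_, ?_⟩⟩
    · exact hq.comp (continuous_sigmaMk.comp (by fun_prop))
    · apply Subtype.ext
      simp [conemap, hxy]
    · apply Subtype.ext
      show aff ((1 - 1 : ℝ) • x) ((1 - 1 : ℝ) • y) I = aff 0 0 (Oct.mk 0 1)
      funext m
      simp [aff]
  have hpc : PathConnectedSpace ↥(cone n) := ⟨⟨z₀⟩, fun a b => (hjoin a).trans (hjoin b).symm⟩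
  exact ⟨hpc.connectedSpace, hpc, hloc⟩


end
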